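/- For every u ≥ 1, all indices j_1, …, j_u ∈ {1, …, n}, and all positive integers n_1, …, n_u, one has m((id ⊗ κ)(φ(x_{j_1}^{n_1} ⋯ x_{j_u}^{n_u}))) = 0 in U, where m : U ⊗_k U → U is the multiplication map of U. -/

import Mathlib

open scoped TensorProduct

/-- The Cartan matrix of type `A_n`. -/
def cartanA (n : ℕ) (i j : Fin n) : ℤ :=
  if i = j then 2
  else if (i : ℕ) + 1 = (j : ℕ) ∨ (j : ℕ) + 1 = (i : ℕ) then -1
  else 0

/-- For `α, γ ∈ ℕⁿ`, `c(α,γ) = ∑_{i,j} a_{ij} α_i γ_j` with `A` the Cartan matrix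
of type `A_n`. -/
def cpair {n : ℕ} (α γ : Fin n → ℕ) : ℤ :=
  ∑ i : Fin n, ∑ j : Fin n, cartanA n i j * (α i : ℤ) * (γ j : ℤ)

/-- The quantum Serre relations of type `A_n` hold for the family `y`. -/
def serreCond (k : Type) [CommRing k] (q : kˣ) {n : ℕ} {B : Type} [Ring B] [Algebra k B]
    (y : Fin n → B) : Prop :=
  (∀ i j : Fin n, 1 < |((i : ℕ) : ℤ) - ((j : ℕ) : ℤ)| → y i * y j = y j * y i) ∧
  (∀ i j : Fin n, |((i : ℕ) : ℤ) - ((j : ℕ) : ℤ)| = 1 →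
    y i ^ 2 * y j - ((q : k) + ((q⁻¹ : kˣ) : k)) • (y i * y j * y i) + y j * y i ^ 2 = 0)

/-- `U`, with distinguished generators `x`, is a presentation of `U_q^+(sl_{n+1})`:
the quotient of the free associative unital `k`-algebra on `x_1, …, x_n` by the
two-sided ideal generated by the quantum Serre relations.  This is expressed by:
the relations hold in `U`, the `x i` generate `U`, and `U` has the corresponding
universal (lifting) property. -/
def IsUqPlus (k : Type) [CommRing k] (q : kˣ) {n : ℕ} (U : Type) [Ring U] [Algebra k U]
    (x : Fin n → U) : Prop :=
  serreCond k q x ∧ Algebra.adjoin k (Set.range x) = ⊤ ∧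
    ∀ (B : Type) [Ring B] [Algebra k B] (y : Fin n → B),
      serreCond k q y → ∃ f : U →ₐ[k] B, ∀ i, f (x i) = y i

/-- for every `u ≥ 1`, all indices `j_1, …, j_u ∈ {1, …, n}` and all positive
integers `n_1, …, n_u`, one has `m((id ⊗ κ)(φ(x_{j_1}^{n_1} ⋯ x_{j_u}^{n_u}))) = 0` in `U`,
where `m` is the multiplication map of `U`, `φ : U → U ⊗_σ U` the algebra homomorphism with
`φ(x_i) = x_i ⊗ 1 + 1 ⊗ x_i`, and `κ` the twisted antihomomorphism with `κ(x_i) = −x_i`. -/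
theorem stmt12 (k U : Type) [CommRing k] (q : kˣ) (n : ℕ) (hn : 1 ≤ n)
    [Ring U] [Algebra k U] (x : Fin n → U) (hU : IsUqPlus k q U x)
    (𝒜 : (Fin n → ℕ) → Submodule k U) [GradedAlgebra 𝒜]
    (hx𝒜 : ∀ i : Fin n, x i ∈ 𝒜 (Pi.single i 1))
    (μ : U ⊗[k] U →ₗ[k] U ⊗[k] U →ₗ[k] U ⊗[k] U)
    (hμ : ∀ (α γ : Fin n → ℕ) (b c : U), b ∈ 𝒜 α → c ∈ 𝒜 γ → ∀ a d : U,
      μ (a ⊗ₜ[k] b) (c ⊗ₜ[k] d) = ((q ^ cpair α γ : kˣ) : k) • ((a * c) ⊗ₜ[k] (b * d)))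
    (φ : U →ₗ[k] U ⊗[k] U)
    (hφ1 : φ 1 = (1 : U) ⊗ₜ[k] (1 : U))
    (hφm : ∀ a b : U, φ (a * b) = μ (φ a) (φ b))
    (hφx : ∀ i : Fin n, φ (x i) = x i ⊗ₜ[k] (1 : U) + (1 : U) ⊗ₜ[k] x i)
    (κ : U →ₗ[k] U)
    (hκ1 : κ 1 = 1)
    (hκx : ∀ i : Fin n, κ (x i) = -x i)
    (hκm : ∀ (α β : Fin n → ℕ) (a b : U), a ∈ 𝒜 α → b ∈ 𝒜 β →
      κ (a * b) = ((q ^ cpair α β : kˣ) : k) • (κ b * κ a)) :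
    ∀ (u : ℕ), 1 ≤ u → ∀ (js : Fin u → Fin n) (ns : Fin u → ℕ), (∀ a, 1 ≤ ns a) →
      LinearMap.mul' k U
        (TensorProduct.map LinearMap.id κ
          (φ (List.ofFn (fun a : Fin u => x (js a) ^ ns a)).prod)) = 0 := by
  have key : ∀ (i : Fin n) (t : U ⊗[k] U),
      (LinearMap.mul' k U ∘ₗ TensorProduct.map LinearMap.id κ ∘ₗ
        μ.flip (x i ⊗ₜ[k] (1 : U) + (1 : U) ⊗ₜ[k] x i)) t = 0 := by
    intro i t
    induction t using TensorProduct.induction_on with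
    | zero => simp
    | add t₁ t₂ h₁ h₂ => rw [map_add, h₁, h₂, add_zero]
    | tmul a b =>
      induction b using DirectSum.Decomposition.inductionOn 𝒜 with
      | zero => rw [TensorProduct.tmul_zero]; simp
      | add b b' hb hb' => rw [TensorProduct.tmul_add, map_add, hb, hb', add_zero]
      | @homogeneous β b =>
        obtain ⟨b, hb⟩ := b
        simp only [LinearMap.comp_apply, LinearMap.flip_apply]
        rw [map_add (μ (a ⊗ₜ[k] b))]
        rw [hμ β (Pi.single i 1) b (x i) hb (hx𝒜 i) a 1,
          hμ β 0 b 1 hb (SetLike.one_mem_graded 𝒜) a (x i)]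
        have hc0 : cpair β (0 : Fin n → ℕ) = 0 := by simp [cpair]
        have hκb : κ (b * x i) = ((q ^ cpair β (Pi.single i 1) : kˣ) : k) • (-x i * κ b) := by
          rw [hκm β (Pi.single i 1) b (x i) hb (hx𝒜 i), hκx]
        simp only [hc0, zpow_zero, Units.val_one, one_smul, mul_one]
        rw [map_add, map_smul, TensorProduct.map_tmul, TensorProduct.map_tmul,
          LinearMap.id_apply, LinearMap.id_apply, hκb, TensorProduct.tmul_smul,
          map_add, map_smul, map_smul, LinearMap.mul'_apply, LinearMap.mul'_apply]
        rw [← smul_add, neg_mul, mul_neg, mul_assoc]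
        simp
  intro u hu js ns hns
  obtain ⟨m, rfl⟩ : ∃ m, u = m + 1 := ⟨u - 1, (Nat.succ_pred_eq_of_pos hu).symm⟩
  rw [List.ofFn_succ', List.concat_eq_append, List.prod_append, List.prod_cons, List.prod_nil,
    mul_one]
  have hN : x (js (Fin.last m)) ^ ns (Fin.last m)
      = x (js (Fin.last m)) ^ (ns (Fin.last m) - 1) * x (js (Fin.last m)) := by
    conv_lhs => rw [← Nat.succ_pred_eq_of_pos (hns (Fin.last m))]
    rw [pow_succ, Nat.pred_eq_sub_one]
  rw [hN, ← mul_assoc, hφm, hφx]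
  have := key (js (Fin.last m))
    (φ ((List.ofFn fun i : Fin m => x (js i.castSucc) ^ ns i.castSucc).prod
      * x (js (Fin.last m)) ^ (ns (Fin.last m) - 1)))
  simpa using this
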